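/- The function h2(x) = ((x+1)/(x+2)) · (1 + 1/x)^(x+3/2) is strictly decreasing on (0, ∞) and tends to e as x → ∞. -/

import Mathlib

open Real Filter Set Topology

private lemma log_bound_aux {x : ℝ} (hx : 0 < x) :
    Real.log (x + 1) - Real.log x < (2 * x + 1) / (2 * x * (x + 1)) := by
  set p : ℝ → ℝ := fun u => (u - u⁻¹) / 2 - Real.log u with hp
  have hasD : ∀ u : ℝ, 0 < u → HasDerivAt p ((1 + (u ^ 2)⁻¹) / 2 - u⁻¹) u := by
    intro u hu
    have h1 : HasDerivAt (fun v : ℝ => (v - v⁻¹) / 2) ((1 - -(u ^ 2)⁻¹) / 2) u :=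
      ((hasDerivAt_id u).sub (hasDerivAt_inv hu.ne')).div_const 2
    have h2 := h1.sub (Real.hasDerivAt_log hu.ne')
    refine h2.congr_deriv ?_
    ring
  have mono : StrictMonoOn p (Set.Ici 1) := by
    apply strictMonoOn_of_deriv_pos (convex_Ici 1)
    · intro u hu
      exact (hasD u (lt_of_lt_of_le one_pos hu)).continuousAt.continuousWithinAt
    · intro u hu
      rw [interior_Ici] at hu
      have hu0 : (0 : ℝ) < u := lt_trans one_pos hu
      rw [(hasD u hu0).deriv]
      have he : (1 + (u ^ 2)⁻¹) / 2 - u⁻¹ = (u - 1) ^ 2 / (2 * u ^ 2) := by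
        field_simp; ring
      rw [he]
      have hu1 : (1:ℝ) < u := hu
      apply div_pos (by nlinarith) (by positivity)
  have hu : (1 : ℝ) < (x + 1) / x := by rw [lt_div_iff₀ hx]; linarith
  have key := mono Set.self_mem_Ici (le_of_lt hu) hu
  have hp1 : p 1 = 0 := by simp [hp]
  rw [hp1] at key
  have hx1 : (0 : ℝ) < x + 1 := by linarith
  have hlog : Real.log ((x + 1) / x) = Real.log (x + 1) - Real.log x :=
    Real.log_div hx1.ne' hx.ne'
  have hval : ((x + 1) / x - ((x + 1) / x)⁻¹) / 2 = (2 * x + 1) / (2 * x * (x + 1)) := by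
    rw [inv_div]
    field_simp
    ring
  simp only [hp] at key
  rw [hlog, hval] at key
  linarith

private lemma f_hasDerivAt {x : ℝ} (hx : 0 < x) :
    HasDerivAt (fun y : ℝ => (Real.log (y + 1) - Real.log (y + 2)) +
      (y + 3 / 2) * (Real.log (y + 1) - Real.log y))
      ((1 / (x + 1) - 1 / (x + 2)) +
        (1 * (Real.log (x + 1) - Real.log x) + (x + 3 / 2) * (1 / (x + 1) - 1 / x))) x := by
  have hx1 : (0 : ℝ) < x + 1 := by linarith
  have hx2 : (0 : ℝ) < x + 2 := by linarith
  have h1 : HasDerivAt (fun y : ℝ => Real.log (y + 1)) (1 / (x + 1)) x := by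
    simpa using ((hasDerivAt_id x).add_const 1).log hx1.ne'
  have h2 : HasDerivAt (fun y : ℝ => Real.log (y + 2)) (1 / (x + 2)) x := by
    simpa using ((hasDerivAt_id x).add_const 2).log hx2.ne'
  have h3 : HasDerivAt (fun y : ℝ => Real.log y) (1 / x) x := by
    simpa [one_div] using Real.hasDerivAt_log hx.ne'
  have h4 : HasDerivAt (fun y : ℝ => y + 3 / 2) 1 x := (hasDerivAt_id x).add_const _
  exact (h1.sub h2).add (h4.mul (h1.sub h3))

set_option maxHeartbeats 1000000 in
theorem h2_strictAnti_tendsto_e :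
    StrictAntiOn (fun x : ℝ => ((x + 1) / (x + 2)) * (1 + 1 / x) ^ (x + 3 / 2)) (Set.Ioi 0) ∧
      Filter.Tendsto (fun x : ℝ => ((x + 1) / (x + 2)) * (1 + 1 / x) ^ (x + 3 / 2))
        Filter.atTop (nhds (Real.exp 1)) := by
  set f : ℝ → ℝ := fun y => (Real.log (y + 1) - Real.log (y + 2)) +
      (y + 3 / 2) * (Real.log (y + 1) - Real.log y) with hf
  have key : ∀ x : ℝ, 0 < x →
      ((x + 1) / (x + 2)) * (1 + 1 / x) ^ (x + 3 / 2) = Real.exp (f x) := by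
    intro x hx
    have hx1 : (0 : ℝ) < x + 1 := by linarith
    have hx2 : (0 : ℝ) < x + 2 := by linarith
    have hb : (1 : ℝ) + 1 / x = (x + 1) / x := by field_simp
    have hbp : (0 : ℝ) < (x + 1) / x := div_pos hx1 hx
    rw [hb, Real.rpow_def_of_pos hbp, Real.log_div hx1.ne' hx.ne']
    have hq : (x + 1) / (x + 2) = Real.exp (Real.log (x + 1) - Real.log (x + 2)) := by
      rw [← Real.log_div hx1.ne' hx2.ne', Real.exp_log (div_pos hx1 hx2)]
    rw [hq, ← Real.exp_add, hf]
    ring_nf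
  have fanti : StrictAntiOn f (Set.Ioi 0) := by
    apply strictAntiOn_of_deriv_neg (convex_Ioi 0)
    · intro x hx
      exact (f_hasDerivAt hx).continuousAt.continuousWithinAt
    · intro x hx
      rw [interior_Ioi] at hx
      have hx' : (0 : ℝ) < x := hx
      rw [(f_hasDerivAt hx').deriv]
      have hlog := log_bound_aux hx'
      have hx1 : (0 : ℝ) < x + 1 := by linarith
      have hx2 : (0 : ℝ) < x + 2 := by linarith
      have hA : 1 / (x + 1) - 1 / (x + 2) + ((2 * x + 1) / (2 * x * (x + 1)) +
          (x + 3 / 2) * (1 / (x + 1) - 1 / x)) = -(2 / (x * (x + 1) * (x + 2))) := by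
        field_simp
        ring
      have hpos : (0 : ℝ) < 2 / (x * (x + 1) * (x + 2)) := by positivity
      nlinarith [hlog, hA, hpos]
  constructor
  · intro a ha b hb hab
    simp only [Set.mem_Ioi] at ha hb
    simp only
    rw [key a ha, key b hb]
    exact Real.exp_lt_exp.mpr (fanti ha hb hab)
  · have hC : Tendsto (fun x : ℝ => (x + 1) / (x + 2)) atTop (𝓝 1) := by
      have h2 : Tendsto (fun x : ℝ => 1 - 1 / (x + 2)) atTop (𝓝 (1 - 0)) := by
        apply Tendsto.const_sub
        simpa [one_div, Function.comp_def] using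
          (tendsto_inv_atTop_zero.comp (tendsto_atTop_add_const_right atTop 2 tendsto_id))
      have heq : ∀ᶠ x : ℝ in atTop, 1 - 1 / (x + 2) = (x + 1) / (x + 2) := by
        filter_upwards [eventually_gt_atTop 0] with x hx
        have : (x : ℝ) + 2 ≠ 0 := by positivity
        field_simp
        ring
      simpa using h2.congr' heq
    have hA : Tendsto (fun x : ℝ => (1 + 1 / x) ^ x) atTop (𝓝 (Real.exp 1)) :=
      tendsto_one_add_div_rpow_exp 1
    have hB : Tendsto (fun x : ℝ => (1 + 1 / x) ^ ((3 : ℝ) / 2)) atTop (𝓝 1) := by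
      have h1 : Tendsto (fun x : ℝ => 1 + 1 / x) atTop (𝓝 1) := by
        simpa [one_div] using (tendsto_inv_atTop_zero (𝕜 := ℝ)).const_add 1
      have := h1.rpow_const (p := (3 : ℝ) / 2) (Or.inl (one_ne_zero (α := ℝ)))
      simpa using this
    have hAB : Tendsto (fun x : ℝ => (1 + 1 / x) ^ (x + 3 / 2)) atTop (𝓝 (Real.exp 1)) := by
      have hmul := hA.mul hB
      rw [mul_one] at hmul
      apply hmul.congr'
      filter_upwards [eventually_gt_atTop 0] with x hx
      have hbp : (0 : ℝ) < 1 + 1 / x := by positivity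
      rw [← Real.rpow_add hbp]
    have := hC.mul hAB
    rw [one_mul] at this
    exact this
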